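/- Suppose real numbers π : (ℤ/kℤ)² → ℝ (for k ≥ 1) satisfy, for every lattice point x, the strict inequality π(x) + π(x + (2,1)) + 1 < π(x + (1,0)) + π(x + (1,1)). Then we reach a contradiction; i.e., no such assignment of weights exists. -/
import Mathlib


theorem stmt13 (k : ℕ) (hk : 1 ≤ k) :
    ¬ ∃ π : ZMod k × ZMod k → ℝ,
      ∀ x : ZMod k × ZMod k,
        π x + π (x + (2, 1)) + 1 < π (x + (1, 0)) + π (x + (1, 1)) := by
  haveI : NeZero k := ⟨by omega⟩
  rintro ⟨π, h⟩
  have key : ∀ c : ZMod k × ZMod k, ∑ x : ZMod k × ZMod k, π (x + c) = ∑ x, π x := by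
    intro c
    exact Fintype.sum_bijective _ (Equiv.addRight c).bijective _ _ (fun x => rfl)
  have hsum : ∑ x : ZMod k × ZMod k, (π x + π (x + (2, 1)) + 1)
      < ∑ x : ZMod k × ZMod k, (π (x + (1, 0)) + π (x + (1, 1))) :=
    Finset.sum_lt_sum_of_nonempty Finset.univ_nonempty (fun x _ => h x)
  rw [Finset.sum_add_distrib, Finset.sum_add_distrib, Finset.sum_add_distrib,
    key (2,1), key (1,0), key (1,1), Finset.sum_const, nsmul_eq_mul, mul_one] at hsum
  have : (0 : ℝ) < (Finset.univ : Finset (ZMod k × ZMod k)).card := by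
    simpa using Finset.card_pos.mpr (Finset.univ_nonempty (α := ZMod k × ZMod k))
  linarith
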